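/- For every n ≥ 2, E[g²(X₁Y₁/(X̄Ȳ))] = ((n−1)²/n²) ∫₀ⁿ ∫₀ⁿ g²(xy) (1 − x/n)^{n−2} (1 − y/n)^{n−2} dy dx. -/

import Mathlib

open MeasureTheory ProbabilityTheory Filter Real Topology

/-- The sample mean of the first `n` variables of the sequence `X`. -/
noncomputable def sampleMean {Ω : Type*} (X : ℕ → Ω → ℝ) (n : ℕ) (ω : Ω) : ℝ :=
  (∑ i ∈ Finset.range n, X i ω) / n

open Set
open scoped NNReal ENNReal

lemma iIndepFun_comp_inl {Ω : Type*} [MeasurableSpace Ω] {μ : Measure Ω} {X Y : ℕ → Ω → ℝ}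
    (h : iIndepFun (Sum.elim X Y) μ) :
    iIndepFun X μ := by
  classical
  rw [iIndepFun_iff_measure_inter_preimage_eq_mul] at h ⊢
  intro S sets hsets
  have := h (S.image Sum.inl) (sets := Sum.elim sets fun _ => Set.univ) ?_
  · simpa [Finset.set_biInter_finset_image, Finset.prod_image (fun a _ b _ h => Sum.inl.inj h)]
      using this
  · rintro (i | j) hj
    · simp only [Finset.mem_image] at hj
      obtain ⟨a, ha, hai⟩ := hj
      cases hai
      simpa using hsets _ ha
    · simp only [Finset.mem_image] at hj
      obtain ⟨a, _, hai⟩ := hj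
      cases hai

lemma iIndepFun_comp_inr {Ω : Type*} [MeasurableSpace Ω] {μ : Measure Ω} {X Y : ℕ → Ω → ℝ}
    (h : iIndepFun (Sum.elim X Y) μ) :
    iIndepFun Y μ := by
  classical
  rw [iIndepFun_iff_measure_inter_preimage_eq_mul] at h ⊢
  intro S sets hsets
  have := h (S.image Sum.inr) (sets := Sum.elim (fun _ => Set.univ) sets) ?_
  · simpa [Finset.set_biInter_finset_image, Finset.prod_image (fun a _ b _ h => Sum.inr.inj h)]
      using this
  · rintro (i | j) hj
    · simp only [Finset.mem_image] at hj
      obtain ⟨a, _, hai⟩ := hj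
      cases hai
    · simp only [Finset.mem_image] at hj
      obtain ⟨a, ha, hai⟩ := hj
      cases hai
      simpa using hsets _ ha

lemma expMeasure_Iic (x : ℝ) :
    expMeasure 1 (Iic x) = ENNReal.ofReal (if 0 ≤ x then 1 - Real.exp (-x) else 0) := by
  have h1 : IsProbabilityMeasure (expMeasure 1) := isProbabilityMeasure_expMeasure one_pos
  have h2 := cdf_eq_real (expMeasure 1) x
  have h3 := cdf_expMeasure_eq one_pos x
  rw [h3, one_mul] at h2
  rw [← ENNReal.ofReal_toReal (measure_ne_top (expMeasure 1) (Iic x)), ← measureReal_def, ← h2]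

lemma expMeasure_Ioi {x : ℝ} (hx : 0 ≤ x) :
    expMeasure 1 (Ioi x) = ENNReal.ofReal (Real.exp (-x)) := by
  have h1 : IsProbabilityMeasure (expMeasure 1) := isProbabilityMeasure_expMeasure one_pos
  have : Ioi x = (Iic x)ᶜ := by simp
  have hle : Real.exp (-x) ≤ 1 := by
    rw [← Real.exp_zero]
    exact Real.exp_le_exp.mpr (by linarith)
  rw [this, measure_compl measurableSet_Iic (measure_ne_top _ _), expMeasure_Iic,
    if_pos hx, measure_univ]
  rw [show (1 : ENNReal) = ENNReal.ofReal 1 by simp]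
  rw [← ENNReal.ofReal_sub _ (by linarith)]
  ring_nf

lemma ae_pos_of_exp {Ω : Type*} [MeasurableSpace Ω] {μ : Measure Ω} {X : Ω → ℝ}
    (hm : Measurable X) (hX : Measure.map X μ = expMeasure 1) : ∀ᵐ ω ∂μ, 0 < X ω := by
  have : μ (X ⁻¹' Iic 0) = 0 := by
    rw [← Measure.map_apply hm measurableSet_Iic, hX, expMeasure_Iic]
    simp
  filter_upwards [measure_eq_zero_iff_ae_notMem.mp this] with ω h
  simpa [not_le] using h

lemma expMeasure_eq_withDensity :
    expMeasure 1 = volume.withDensity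
      (fun x => ((Real.toNNReal (if 0 ≤ x then Real.exp (-x) else 0) : ℝ≥0) : ℝ≥0∞)) := by
  rw [expMeasure, gammaMeasure]
  congr 1
  funext x
  show gammaPDF 1 1 x = _
  rw [show gammaPDF 1 1 x = exponentialPDF 1 x from rfl, exponentialPDF_eq]
  norm_num [ENNReal.ofReal]

lemma integral_exp_neg_mul_expMeasure {c : ℝ} (hc : 0 ≤ c) :
    ∫ x, Real.exp (-(c * x)) ∂(expMeasure 1) = 1 / (1 + c) := by
  have hmeas : Measurable fun x : ℝ => Real.toNNReal (if 0 ≤ x then Real.exp (-x) else 0) :=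
    (Measurable.ite measurableSet_Ici measurable_neg.exp measurable_const).real_toNNReal
  rw [expMeasure_eq_withDensity, integral_withDensity_eq_integral_smul hmeas]
  have h1c : (0:ℝ) < 1 + c := by linarith
  have heq : ∀ x : ℝ, (Real.toNNReal (if 0 ≤ x then Real.exp (-x) else 0)) • Real.exp (-(c * x))
      = Set.indicator (Ici 0) (fun x => Real.exp (-((1+c) * x))) x := by
    intro x
    rw [NNReal.smul_def, smul_eq_mul]
    by_cases hx : 0 ≤ x
    · rw [if_pos hx, Set.indicator_of_mem (mem_Ici.mpr hx)]
      rw [Real.coe_toNNReal _ (by positivity)]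
      rw [← Real.exp_add]
      ring_nf
    · rw [if_neg hx, Set.indicator_of_notMem (by simpa using hx)]; simp
  rw [funext heq, integral_indicator measurableSet_Ici, integral_Ici_eq_integral_Ioi]
  have hderiv : ∀ x ∈ Ici (0:ℝ), HasDerivAt (fun x => -(1+c)⁻¹ * Real.exp (-((1+c) * x)))
      (Real.exp (-((1+c) * x))) x := by
    intro x _
    have h1 : HasDerivAt (fun x : ℝ => -((1+c) * x)) (-(1+c)) x := by
      have h := ((hasDerivAt_id x).const_mul (1+c)).neg
      rw [mul_one] at h
      exact h
    have h3 := h1.exp.const_mul (-(1+c)⁻¹)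
    refine h3.congr_deriv ?_
    field_simp
  have hint : IntegrableOn (fun x => Real.exp (-((1+c) * x))) (Ioi 0) := by
    have h := exp_neg_integrableOn_Ioi 0 h1c
    have he : (fun x : ℝ => Real.exp (-((1+c)*x))) = fun x : ℝ => Real.exp (-(1+c)*x) := by
      funext x; congr 1; ring
    rw [he]; exact h
  have htend : Filter.Tendsto (fun x => -(1+c)⁻¹ * Real.exp (-((1+c) * x)))
      Filter.atTop (nhds 0) := by
    have h0 : Filter.Tendsto (fun x : ℝ => (1+c) * x) Filter.atTop Filter.atTop :=
      Filter.Tendsto.const_mul_atTop h1c Filter.tendsto_id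
    have h1 : Filter.Tendsto (fun x : ℝ => Real.exp (-((1+c) * x))) Filter.atTop (nhds 0) :=
      Real.tendsto_exp_neg_atTop_nhds_zero.comp h0
    simpa using h1.const_mul (-(1+c)⁻¹)
  rw [integral_Ioi_of_hasDerivAt_of_tendsto' hderiv hint htend]
  simp [one_div]

lemma tail_lemma {Ω : Type*} [MeasurableSpace Ω] {μ : Measure Ω} [IsProbabilityMeasure μ]
    {X : ℕ → Ω → ℝ} (hmX : ∀ i, Measurable (X i))
    (hXind : iIndepFun X μ)
    (hX : ∀ i, Measure.map (X i) μ = expMeasure 1)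
    {n : ℕ} (hn : 2 ≤ n) {a : ℝ} (ha : 0 ≤ a) (han : a < n) :
    μ {ω | a * (∑ i ∈ Finset.Ico 1 n, X i ω) < ((n:ℝ) - a) * X 0 ω}
      = ENNReal.ofReal ((1 - a/(n:ℝ))^(n-1)) := by
  have hPexp : IsProbabilityMeasure (expMeasure 1) := isProbabilityMeasure_expMeasure one_pos
  set R : Ω → ℝ := fun ω => ∑ i ∈ Finset.Ico 1 n, X i ω with hR
  have hna : (0:ℝ) < (n:ℝ) - a := by linarith
  have hnpos : (0:ℝ) < n := by positivity
  set c : ℝ := a / ((n:ℝ) - a) with hc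
  have hc0 : 0 ≤ c := div_nonneg ha hna.le
  have hRmeas : Measurable R := by
    apply Finset.measurable_sum
    exact fun i _ => hmX i
  -- R nonneg a.e.
  have hRpos : ∀ᵐ ω ∂μ, 0 ≤ R ω := by
    have h : ∀ᵐ ω ∂μ, ∀ i ∈ Finset.Ico 1 n, 0 < X i ω :=
      (ae_ball_iff (Finset.Ico 1 n).countable_toSet).mpr
        fun i _ => ae_pos_of_exp (hmX i) (hX i)
    filter_upwards [h] with ω hω
    exact Finset.sum_nonneg fun i hi => (hω i hi).le
  -- independence
  have hind : IndepFun R (X 0) μ := by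
    have := hXind.indepFun_finsetSum_of_notMem hmX
      (show (0:ℕ) ∉ Finset.Ico 1 n by simp)
    have he : (∑ j ∈ Finset.Ico 1 n, X j) = R := by
      funext ω; simp [hR, Finset.sum_apply]
    rwa [he] at this
  have hmap : Measure.map (fun ω => (R ω, X 0 ω)) μ
      = (Measure.map R μ).prod (expMeasure 1) := by
    rw [← hX 0]
    exact (indepFun_iff_map_prod_eq_prod_map_map hRmeas.aemeasurable
      (hmX 0).aemeasurable).mp hind
  have hEmeas : MeasurableSet {p : ℝ × ℝ | a * p.1 < ((n:ℝ) - a) * p.2} :=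
    measurableSet_lt (measurable_fst.const_mul a) (measurable_snd.const_mul _)
  have h1 : μ {ω | a * R ω < ((n:ℝ) - a) * X 0 ω}
      = ((Measure.map R μ).prod (expMeasure 1)) {p : ℝ × ℝ | a * p.1 < ((n:ℝ) - a) * p.2} := by
    rw [← hmap, Measure.map_apply (hRmeas.prodMk (hmX 0)) hEmeas]
    rfl
  rw [h1, Measure.prod_apply hEmeas]
  have h2 : ∀ r : ℝ, (Prod.mk r ⁻¹' {p : ℝ × ℝ | a * p.1 < ((n:ℝ) - a) * p.2})
      = Ioi (a * r / ((n:ℝ) - a)) := by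
    intro r
    ext x
    simp only [mem_preimage, mem_setOf_eq, mem_Ioi]
    rw [div_lt_iff₀ hna]
    constructor <;> intro h <;> linarith [mul_comm x ((n:ℝ) - a)]
  simp_rw [h2]
  -- replace by exp formula a.e.
  have hae : ∀ᵐ r ∂(Measure.map R μ), 0 ≤ r := by
    rw [ae_map_iff hRmeas.aemeasurable measurableSet_Ici]
    exact hRpos
  have h3 : ∫⁻ r, expMeasure 1 (Ioi (a * r / ((n:ℝ) - a))) ∂(Measure.map R μ)
      = ∫⁻ r, ENNReal.ofReal (Real.exp (-(c * r))) ∂(Measure.map R μ) := by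
    apply lintegral_congr_ae
    filter_upwards [hae] with r hr
    rw [expMeasure_Ioi (by positivity)]
    congr 1
    rw [hc]; ring_nf
  rw [h3, lintegral_map (f := fun r : ℝ => ENNReal.ofReal (Real.exp (-(c * r)))) (Measurable.ennreal_ofReal ((measurable_id'.const_mul c).neg.exp)) hRmeas]
  -- to mgf
  have hint : Integrable (fun ω => Real.exp (-(c * R ω))) μ := by
    apply Integrable.mono' (f := fun ω => Real.exp (-(c * R ω))) (integrable_const 1)
      (((hRmeas.const_mul c).neg.exp).aestronglyMeasurable)
    filter_upwards [hRpos] with ω hω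
    rw [Real.norm_eq_abs, abs_of_pos (Real.exp_pos _)]
    rw [← Real.exp_zero]
    apply Real.exp_le_exp.mpr
    have : 0 ≤ c * R ω := mul_nonneg hc0 hω
    linarith
  rw [← ofReal_integral_eq_lintegral_ofReal hint
    (Filter.Eventually.of_forall fun ω => (Real.exp_pos _).le)]
  have h4 : ∫ ω, Real.exp (-(c * R ω)) ∂μ = mgf R μ (-c) := by
    rw [mgf]
    congr 1; funext ω; ring_nf
  rw [h4]
  have h5 : mgf R μ (-c) = ∏ i ∈ Finset.Ico 1 n, mgf (X i) μ (-c) := by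
    have he : R = ∑ j ∈ Finset.Ico 1 n, X j := by
      funext ω; simp [hR, Finset.sum_apply]
    rw [he]
    exact hXind.mgf_sum hmX _
  have h6 : ∀ i, mgf (X i) μ (-c) = 1 / (1 + c) := by
    intro i
    rw [mgf, ← integral_map (hmX i).aemeasurable ((measurable_id'.const_mul (-c)).exp).aestronglyMeasurable, hX i]
    rw [← integral_exp_neg_mul_expMeasure hc0]
    congr 1; funext x; ring_nf
  rw [h5]
  rw [Finset.prod_congr rfl fun i _ => h6 i, Finset.prod_const, Nat.card_Ico]
  congr 1
  have : 1 / (1 + c) = 1 - a / n := by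
    rw [hc]
    field_simp
    ring
  rw [this]

lemma dens_hasDeriv {n : ℕ} (hn : 2 ≤ n) (x : ℝ) :
    HasDerivAt (fun x : ℝ => -((1 - x/n)^(n-1)))
      (((n:ℝ)-1)/n * (1-x/n)^(n-2)) x := by
  have hnpos : (0:ℝ) < n := by positivity
  have h1 : HasDerivAt (fun x : ℝ => 1 - x/n) (-(n:ℝ)⁻¹) x := by
    simpa using ((hasDerivAt_id x).div_const (n:ℝ)).const_sub 1
  have h2 := (h1.pow (n-1)).neg
  refine h2.congr_deriv ?_
  have : (n - 1 - 1 : ℕ) = n - 2 := by omega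
  rw [this]
  have hcast : ((n - 1 : ℕ) : ℝ) = (n:ℝ) - 1 := by
    have : (1:ℕ) ≤ n := by omega
    push_cast [Nat.cast_sub this]
    ring
  rw [hcast]
  ring

lemma dens_integral {n : ℕ} (hn : 2 ≤ n) {b : ℝ} (hb0 : 0 ≤ b) :
    ∫ x in Set.Ioc 0 b, ((n:ℝ)-1)/n * (1-x/n)^(n-2) = 1 - (1-b/n)^(n-1) := by
  have hcont : Continuous fun x : ℝ => ((n:ℝ)-1)/n * (1-x/n)^(n-2) := by
    continuity
  rw [← intervalIntegral.integral_of_le hb0]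
  rw [intervalIntegral.integral_eq_sub_of_hasDerivAt
    (fun x _ => dens_hasDeriv hn x) (hcont.intervalIntegrable 0 b)]
  simp
  ring

noncomputable def densFn (n : ℕ) : ℝ → ℝ :=
  Set.indicator (Set.Ioc 0 (n:ℝ)) (fun x => ((n:ℝ)-1)/n * (1-x/n)^(n-2))

lemma densFn_meas (n : ℕ) : Measurable (densFn n) :=
  Measurable.indicator (by measurability) measurableSet_Ioc

lemma nu_Iic {n : ℕ} (hn : 2 ≤ n) (t : ℝ) :
    (volume.withDensity fun x => ENNReal.ofReal (densFn n x)) (Iic t)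
      = if 0 ≤ t then ENNReal.ofReal (1 - (1 - (min t n)/n)^(n-1)) else 0 := by
  have hnpos : (0:ℝ) < n := by positivity
  rw [withDensity_apply _ measurableSet_Iic]
  have h1 : ∫⁻ a in Iic t, ENNReal.ofReal (densFn n a)
      = ∫⁻ a in Iic t, Set.indicator (Set.Ioc 0 (n:ℝ))
          (fun x => ENNReal.ofReal (((n:ℝ)-1)/n * (1-x/n)^(n-2))) a := by
    apply lintegral_congr
    intro x
    rw [densFn]
    by_cases hx : x ∈ Set.Ioc 0 (n:ℝ)
    · rw [Set.indicator_of_mem hx, Set.indicator_of_mem hx]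
    · rw [Set.indicator_of_notMem hx, Set.indicator_of_notMem hx]; simp
  rw [h1, lintegral_indicator measurableSet_Ioc,
    Measure.restrict_restrict measurableSet_Ioc]
  have h2 : Set.Ioc 0 (n:ℝ) ∩ Iic t = Set.Ioc 0 (min t n) := by
    ext x
    simp only [mem_inter_iff, mem_Ioc, mem_Iic, le_min_iff]
    tauto
  rw [h2]
  by_cases ht : 0 ≤ t
  · rw [if_pos ht]
    have hmin0 : 0 ≤ min t (n:ℝ) := le_min ht hnpos.le
    rw [← ofReal_integral_eq_lintegral_ofReal]
    · rw [dens_integral hn hmin0]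
    · exact ((by continuity : Continuous fun x : ℝ => ((n:ℝ)-1)/n * (1-x/n)^(n-2)).integrableOn_Ioc)
    · rw [Filter.EventuallyLE, ae_restrict_iff' measurableSet_Ioc]
      apply Filter.Eventually.of_forall
      intro x hx
      have hxn : x ≤ min t n := hx.2
      have : x ≤ (n:ℝ) := le_trans hxn (min_le_right _ _)
      have h1 : (0:ℝ) ≤ 1 - x/n := by
        rw [sub_nonneg, div_le_one hnpos]; exact this
      have hn1 : (0:ℝ) ≤ (n:ℝ) - 1 := by
        have : (1:ℝ) ≤ (n:ℝ) := by exact_mod_cast Nat.one_le_of_lt hn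
        linarith
      exact mul_nonneg (div_nonneg hn1 hnpos.le) (pow_nonneg h1 _)
  · rw [if_neg ht]
    have : Set.Ioc (0:ℝ) (min t n) = ∅ := by
      apply Set.Ioc_eq_empty
      rw [not_lt]
      exact le_trans (min_le_left _ _) (by linarith)
    rw [this]
    simp

lemma map_ratio_eq {Ω : Type*} [MeasurableSpace Ω] {μ : Measure Ω} [IsProbabilityMeasure μ]
    {X : ℕ → Ω → ℝ} (hmX : ∀ i, Measurable (X i))
    (hXind : iIndepFun X μ)
    (hX : ∀ i, Measure.map (X i) μ = expMeasure 1)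
    {n : ℕ} (hn : 2 ≤ n) :
    Measure.map (fun ω => X 0 ω / ((∑ i ∈ Finset.range n, X i ω) / n)) μ
      = volume.withDensity fun x => ENNReal.ofReal (densFn n x) := by
  have hnpos : (0:ℝ) < n := by positivity
  set U : Ω → ℝ := fun ω => X 0 ω / ((∑ i ∈ Finset.range n, X i ω) / n) with hU
  have hSmeas : Measurable fun ω => ∑ i ∈ Finset.range n, X i ω :=
    Finset.measurable_sum _ fun i _ => hmX i
  have hUmeas : Measurable U := (hmX 0).div (hSmeas.div_const _)
  have hRmeas : Measurable fun ω => ∑ i ∈ Finset.Ico 1 n, X i ω :=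
    Finset.measurable_sum _ fun i _ => hmX i
  have : IsProbabilityMeasure (Measure.map U μ) := Measure.isProbabilityMeasure_map hUmeas.aemeasurable
  -- a.e. positivity
  have hG : ∀ᵐ ω ∂μ, ∀ i ∈ Finset.range n, 0 < X i ω :=
    (ae_ball_iff (Finset.range n).countable_toSet).mpr fun i _ => ae_pos_of_exp (hmX i) (hX i)
  have hsplit : ∀ ω, ∑ i ∈ Finset.range n, X i ω = X 0 ω + ∑ i ∈ Finset.Ico 1 n, X i ω := by
    intro ω
    rw [Finset.range_eq_Ico, Finset.sum_eq_sum_Ico_succ_bot (by omega)]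
  apply MeasureTheory.Measure.ext_of_Iic
  intro t
  rw [Measure.map_apply hUmeas measurableSet_Iic, nu_Iic hn t]
  by_cases ht : 0 ≤ t
  · rw [if_pos ht]
    by_cases htn : t < n
    · -- main case
      have hpre : U ⁻¹' Iic t = {ω | t < U ω}ᶜ := by
        ext ω; simp [not_lt]
      rw [hpre, measure_compl (measurableSet_lt measurable_const hUmeas) (measure_ne_top _ _)]
      have hcongr : μ {ω | t < U ω}
          = μ {ω | t * (∑ i ∈ Finset.Ico 1 n, X i ω) < ((n:ℝ) - t) * X 0 ω} := by
        apply measure_congr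
        filter_upwards [hG] with ω hω
        have hX0 : 0 < X 0 ω := hω 0 (Finset.mem_range.mpr (by omega))
        have hRpos : 0 < ∑ i ∈ Finset.Ico 1 n, X i ω := by
          apply Finset.sum_pos (fun i hi => hω i ?_) ⟨1, by simp; omega⟩
          simp only [Finset.mem_Ico] at hi
          exact Finset.mem_range.mpr (by omega)
        have hSpos : 0 < ∑ i ∈ Finset.range n, X i ω := by
          rw [hsplit ω]; linarith
        show (t < U ω) = (t * (∑ i ∈ Finset.Ico 1 n, X i ω) < ((n:ℝ) - t) * X 0 ω)
        rw [eq_iff_iff]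
        have hUeq : U ω = X 0 ω * n / (∑ i ∈ Finset.range n, X i ω) :=
          div_div_eq_mul_div _ _ _
        rw [hUeq, lt_div_iff₀ hSpos, hsplit ω]
        constructor <;> intro h <;> nlinarith
      rw [hcongr, tail_lemma hmX hXind hX hn ht htn]
      rw [min_eq_left htn.le, measure_univ]
      have hp : (0:ℝ) ≤ (1 - t/n)^(n-1) := by
        have : (0:ℝ) ≤ 1 - t/n := by
          rw [sub_nonneg, div_le_one hnpos]; exact htn.le
        positivity
      rw [show (1:ℝ≥0∞) = ENNReal.ofReal 1 by simp, ← ENNReal.ofReal_sub _ hp]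
    · -- t ≥ n
      push_neg at htn
      have hmin : min t (n:ℝ) = n := min_eq_right htn
      rw [hmin]
      have hz : (1 - (n:ℝ)/n)^(n-1) = 0 := by
        rw [div_self hnpos.ne', sub_self]
        exact zero_pow (by omega)
      rw [hz, sub_zero, ENNReal.ofReal_one]
      rw [← prob_compl_eq_zero_iff (hUmeas measurableSet_Iic)]
      rw [measure_eq_zero_iff_ae_notMem]
      filter_upwards [hG] with ω hω
      have hX0 : 0 < X 0 ω := hω 0 (Finset.mem_range.mpr (by omega))
      have hRpos : 0 < ∑ i ∈ Finset.Ico 1 n, X i ω := by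
        apply Finset.sum_pos (fun i hi => hω i ?_) ⟨1, by simp; omega⟩
        simp only [Finset.mem_Ico] at hi
        exact Finset.mem_range.mpr (by omega)
      have hSpos : 0 < ∑ i ∈ Finset.range n, X i ω := by
        rw [hsplit ω]; linarith
      simp only [Set.mem_compl_iff, Set.mem_preimage, Set.mem_Iic, not_not, not_le, not_lt]
      show U ω ≤ t
      rw [hU]
      simp only
      rw [div_div_eq_mul_div, div_le_iff₀ hSpos]
      have h1 : X 0 ω ≤ ∑ i ∈ Finset.range n, X i ω := by rw [hsplit ω]; linarith
      nlinarith
  · rw [if_neg ht]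
    push_neg at ht
    rw [measure_eq_zero_iff_ae_notMem]
    filter_upwards [hG] with ω hω
    have hX0 : 0 < X 0 ω := hω 0 (Finset.mem_range.mpr (by omega))
    have hSpos : 0 < ∑ i ∈ Finset.range n, X i ω := by
      apply Finset.sum_pos (fun i hi => hω i hi) ⟨0, Finset.mem_range.mpr (by omega)⟩
    have hUpos : 0 < U ω := by
      rw [hU]
      exact div_pos hX0 (div_pos hSpos hnpos)
    simp only [Set.mem_preimage, Set.mem_Iic, not_le]
    linarith

theorem lecam2d_formula9
    {Ω : Type*} [MeasureSpace Ω] [IsProbabilityMeasure (ℙ : Measure Ω)]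
    (X Y : ℕ → Ω → ℝ)
    (hmX : ∀ i, Measurable (X i)) (hmY : ∀ j, Measurable (Y j))
    (hindep : iIndepFun (Sum.elim X Y) ℙ)
    (hX : ∀ i, Measure.map (X i) ℙ = expMeasure 1)
    (hY : ∀ j, Measure.map (Y j) ℙ = expMeasure 1)
    (g : ℝ → ℝ) (hgm : Measurable g)
    (n : ℕ) (hn : 2 ≤ n)
    (hint : Integrable (fun ω => (g (X 0 ω * Y 0 ω / (sampleMean X n ω * sampleMean Y n ω))) ^ 2) ℙ) :
    (∫ ω, (g (X 0 ω * Y 0 ω / (sampleMean X n ω * sampleMean Y n ω))) ^ 2 ∂ℙ) =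
      ((n : ℝ) - 1) ^ 2 / (n : ℝ) ^ 2 *
        ∫ x in (0 : ℝ)..(n : ℝ), ∫ y in (0 : ℝ)..(n : ℝ),
          (g (x * y)) ^ 2 * (1 - x / n) ^ (n - 2) * (1 - y / n) ^ (n - 2) := by
  classical
  have hnpos : (0:ℝ) < n := by positivity
  set U : Ω → ℝ := fun ω => X 0 ω / sampleMean X n ω with hU
  set V : Ω → ℝ := fun ω => Y 0 ω / sampleMean Y n ω with hV
  have hSXmeas : Measurable (sampleMean X n) :=
    (Finset.measurable_sum _ fun i _ => hmX i).div_const _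
  have hSYmeas : Measurable (sampleMean Y n) :=
    (Finset.measurable_sum _ fun i _ => hmY i).div_const _
  have hUmeas : Measurable U := (hmX 0).div hSXmeas
  have hVmeas : Measurable V := (hmY 0).div hSYmeas
  set ν : Measure ℝ := volume.withDensity fun x => ENNReal.ofReal (densFn n x) with hν
  have hUmap : Measure.map U ℙ = ν :=
    map_ratio_eq hmX (iIndepFun_comp_inl hindep) hX hn
  have hVmap : Measure.map V ℙ = ν :=
    map_ratio_eq hmY (iIndepFun_comp_inr hindep) hY hn
  have hνprob : IsProbabilityMeasure ν := by
    rw [← hUmap]; exact Measure.isProbabilityMeasure_map hUmeas.aemeasurable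
  -- independence of U and V
  have hIndUV : IndepFun U V ℙ := by
    set S : Finset (ℕ ⊕ ℕ) := (Finset.range n).image Sum.inl with hS
    set T : Finset (ℕ ⊕ ℕ) := (Finset.range n).image Sum.inr with hT
    have hST : Disjoint S T := by
      rw [Finset.disjoint_left]
      rintro a ha hb
      simp only [hS, hT, Finset.mem_image] at ha hb
      obtain ⟨i, _, rfl⟩ := ha
      obtain ⟨j, _, h⟩ := hb
      exact absurd h (by simp)
    have hmelim : ∀ i, Measurable (Sum.elim X Y i) := by
      rintro (i | j)
      · exact hmX i
      · exact hmY j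
    have hbase := hindep.indepFun_finset S T hST hmelim
    have h0S : Sum.inl 0 ∈ S := Finset.mem_image_of_mem _ (Finset.mem_range.mpr (by omega))
    have h0T : Sum.inr 0 ∈ T := Finset.mem_image_of_mem _ (Finset.mem_range.mpr (by omega))
    have hiS : ∀ i ∈ Finset.range n, Sum.inl i ∈ S := fun i hi => Finset.mem_image_of_mem _ hi
    have hiT : ∀ i ∈ Finset.range n, Sum.inr i ∈ T := fun i hi => Finset.mem_image_of_mem _ hi
    set φ : ({x // x ∈ S} → ℝ) → ℝ := fun v =>
      v ⟨Sum.inl 0, h0S⟩ / ((∑ i ∈ (Finset.range n).attach, v ⟨Sum.inl i.1, hiS i.1 i.2⟩) / n)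
      with hφ
    set ψ : ({x // x ∈ T} → ℝ) → ℝ := fun v =>
      v ⟨Sum.inr 0, h0T⟩ / ((∑ i ∈ (Finset.range n).attach, v ⟨Sum.inr i.1, hiT i.1 i.2⟩) / n)
      with hψ
    have hφmeas : Measurable φ :=
      (measurable_pi_apply _).div
        ((Finset.measurable_sum ((Finset.range n).attach)
          (fun i _ => measurable_pi_apply (⟨Sum.inl i.1, hiS i.1 i.2⟩ : {x // x ∈ S}))).div_const _)
    have hψmeas : Measurable ψ :=
      (measurable_pi_apply _).div
        ((Finset.measurable_sum ((Finset.range n).attach)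
          (fun i _ => measurable_pi_apply (⟨Sum.inr i.1, hiT i.1 i.2⟩ : {x // x ∈ T}))).div_const _)
    have := hbase.comp hφmeas hψmeas
    have heqU : (φ ∘ fun a (i : {x // x ∈ S}) => Sum.elim X Y i.1 a) = U := by
      funext ω
      simp only [Function.comp_apply, hφ, hU, sampleMean, Sum.elim_inl]
      rw [Finset.sum_attach (Finset.range n) (fun j => X j ω)]
    have heqV : (ψ ∘ fun a (i : {x // x ∈ T}) => Sum.elim X Y i.1 a) = V := by
      funext ω
      simp only [Function.comp_apply, hψ, hV, sampleMean, Sum.elim_inr]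
      rw [Finset.sum_attach (Finset.range n) (fun j => Y j ω)]
    rwa [heqU, heqV] at this
  -- rewrite integrand
  have hfuneq : (fun ω => (g (X 0 ω * Y 0 ω / (sampleMean X n ω * sampleMean Y n ω))) ^ 2)
      = (fun p : ℝ × ℝ => (g (p.1 * p.2)) ^ 2) ∘ (fun ω => (U ω, V ω)) := by
    funext ω
    simp only [Function.comp_apply, hU, hV]
    rw [div_mul_div_comm]
  have hpairmeas : Measurable fun ω => (U ω, V ω) := hUmeas.prodMk hVmeas
  have hGmeas : Measurable fun p : ℝ × ℝ => (g (p.1 * p.2)) ^ 2 :=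
    (hgm.comp (measurable_fst.mul measurable_snd)).pow_const 2
  have hmappair : Measure.map (fun ω => (U ω, V ω)) ℙ = ν.prod ν := by
    rw [(indepFun_iff_map_prod_eq_prod_map_map hUmeas.aemeasurable
      hVmeas.aemeasurable).mp hIndUV, hUmap, hVmap]
  have hstep : (∫ ω, (g (X 0 ω * Y 0 ω / (sampleMean X n ω * sampleMean Y n ω))) ^ 2 ∂ℙ)
      = ∫ p : ℝ × ℝ, (g (p.1 * p.2)) ^ 2 ∂(ν.prod ν) := by
    rw [← hmappair, integral_map hpairmeas.aemeasurable hGmeas.aestronglyMeasurable]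
    apply integral_congr_ae
    apply Filter.Eventually.of_forall
    intro ω
    show g (X 0 ω * Y 0 ω / (sampleMean X n ω * sampleMean Y n ω)) ^ 2 = g (U ω * V ω) ^ 2
    simp only [hU, hV]
    rw [div_mul_div_comm]
  rw [hstep]
  have hInt2 : Integrable (fun p : ℝ × ℝ => (g (p.1 * p.2)) ^ 2) (ν.prod ν) := by
    rw [← hmappair]
    rw [integrable_map_measure hGmeas.aestronglyMeasurable hpairmeas.aemeasurable]
    rwa [← hfuneq]
  rw [MeasureTheory.integral_prod _ hInt2]
  show (∫ x : ℝ, ∫ y : ℝ, (g (x * y)) ^ 2 ∂ν ∂ν) = _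
  -- density conversions
  have hdens_nonneg : ∀ x, 0 ≤ densFn n x := by
    intro x
    rw [densFn]
    by_cases hx : x ∈ Set.Ioc 0 (n:ℝ)
    · rw [Set.indicator_of_mem hx]
      have h1 : (0:ℝ) ≤ 1 - x/n := by
        rw [sub_nonneg, div_le_one hnpos]; exact hx.2
      have hn1 : (0:ℝ) ≤ (n:ℝ) - 1 := by
        have : (1:ℝ) ≤ (n:ℝ) := by exact_mod_cast Nat.one_le_of_lt hn
        linarith
      exact mul_nonneg (div_nonneg hn1 hnpos.le) (pow_nonneg h1 _)
    · rw [Set.indicator_of_notMem hx]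
  have hconv : ∀ (H : ℝ → ℝ), (∫ x, H x ∂ν) = ∫ x in Set.Ioc 0 (n:ℝ),
      (((n:ℝ)-1)/n * (1-x/n)^(n-2)) * H x := by
    intro H
    have hmeasnn : Measurable fun x => (densFn n x).toNNReal := (densFn_meas n).real_toNNReal
    have : ν = volume.withDensity fun x => ((densFn n x).toNNReal : ENNReal) := rfl
    rw [this, integral_withDensity_eq_integral_smul hmeasnn]
    have heq : ∀ x, (densFn n x).toNNReal • H x
        = Set.indicator (Set.Ioc 0 (n:ℝ)) (fun x => (((n:ℝ)-1)/n * (1-x/n)^(n-2)) * H x) x := by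
      intro x
      rw [NNReal.smul_def, smul_eq_mul, Real.coe_toNNReal _ (hdens_nonneg x), densFn]
      by_cases hx : x ∈ Set.Ioc 0 (n:ℝ)
      · rw [Set.indicator_of_mem hx, Set.indicator_of_mem hx]
      · rw [Set.indicator_of_notMem hx, Set.indicator_of_notMem hx, zero_mul]
    rw [funext heq, integral_indicator measurableSet_Ioc]
  rw [hconv]
  have hinner : ∀ x : ℝ, (∫ y, (g (x * y)) ^ 2 ∂ν) = ∫ y in Set.Ioc 0 (n:ℝ),
      (((n:ℝ)-1)/n * (1-y/n)^(n-2)) * (g (x * y)) ^ 2 := fun x => hconv _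
  -- now pure real computation
  rw [intervalIntegral.integral_of_le hnpos.le]
  rw [← MeasureTheory.integral_const_mul]
  apply integral_congr_ae
  apply Filter.Eventually.of_forall
  intro x
  show ((n:ℝ)-1)/n * (1-x/n)^(n-2) * (∫ y, (g (x*y))^2 ∂ν)
      = ((n:ℝ)-1)^2/(n:ℝ)^2 * ∫ y in (0:ℝ)..(n:ℝ),
          (g (x*y))^2 * (1-x/n)^(n-2) * (1-y/n)^(n-2)
  rw [hinner x, intervalIntegral.integral_of_le hnpos.le]
  rw [← MeasureTheory.integral_const_mul, ← MeasureTheory.integral_const_mul]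
  apply integral_congr_ae
  apply Filter.Eventually.of_forall
  intro y
  ring
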